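/- Let X be a nonempty set, (T_n) a sequence of maps from a set 𝒵 of bounded functions X → ℝ to itself, and T a map 𝒵 → 𝒵 that is a γ-contraction in the supremum norm with unique fixed point q*. Suppose sup_{Z∈𝒵} ‖T_n Z − T Z‖_∞ ≤ c_n with c_n → 0, and suppose the iterates Q_n := T_n T_{n−1} ⋯ T_1 Q_0 converge in supremum norm to some Q*. Then Q* = q*. -/

import Mathlib

open Filter

theorem stmt_17 (X : Type*) [Nonempty X] (𝒵 : Set (X → ℝ))
    (hbdd : ∀ Z ∈ 𝒵, ∃ C, ∀ x, |Z x| ≤ C)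
    (T : (X → ℝ) → (X → ℝ)) (Tn : ℕ → (X → ℝ) → (X → ℝ))
    (γ : ℝ) (hγ0 : 0 ≤ γ) (hγ1 : γ < 1)
    (hTmap : ∀ Z ∈ 𝒵, T Z ∈ 𝒵) (hTnmap : ∀ n, ∀ Z ∈ 𝒵, Tn n Z ∈ 𝒵)
    (hcontr : ∀ f ∈ 𝒵, ∀ g ∈ 𝒵, (⨆ x, |T f x - T g x|) ≤ γ * ⨆ x, |f x - g x|)
    (q : X → ℝ) (hq𝒵 : q ∈ 𝒵) (hfix : T q = q)
    (huniq : ∀ f ∈ 𝒵, T f = f → f = q)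
    (c : ℕ → ℝ) (hc : Tendsto c atTop (nhds 0))
    (happrox : ∀ n, ∀ Z ∈ 𝒵, (⨆ x, |Tn n Z x - T Z x|) ≤ c n)
    (Q : ℕ → X → ℝ) (hQ0 : Q 0 ∈ 𝒵) (hQrec : ∀ n, Q (n + 1) = Tn (n + 1) (Q n))
    (Qs : X → ℝ) (hQs : Qs ∈ 𝒵)
    (hconv : Tendsto (fun n => ⨆ x, |Q n x - Qs x|) atTop (nhds 0)) :
    Qs = q := by
  -- boundedness of differences
  have hbd : ∀ f ∈ 𝒵, ∀ g ∈ 𝒵, BddAbove (Set.range fun x => |f x - g x|) := by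
    intro f hf g hg
    obtain ⟨Cf, hCf⟩ := hbdd f hf
    obtain ⟨Cg, hCg⟩ := hbdd g hg
    refine ⟨Cf + Cg, ?_⟩
    rintro y ⟨x, rfl⟩
    calc |f x - g x| ≤ |f x| + |g x| := abs_sub _ _
      _ ≤ Cf + Cg := add_le_add (hCf x) (hCg x)
  have hQmem : ∀ n, Q n ∈ 𝒵 := by
    intro n
    induction n with
    | zero => exact hQ0
    | succ k ih => rw [hQrec k]; exact hTnmap (k + 1) _ ih
  -- pointwise bound
  have key : ∀ x n, |Qs x - T Qs x| ≤
      (⨆ y, |Q (n + 1) y - Qs y|) + c (n + 1) + γ * ⨆ y, |Q n y - Qs y| := by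
    intro x n
    have h1 : |Qs x - T Qs x| ≤ |Q (n + 1) x - Qs x| + |Q (n + 1) x - T (Q n) x|
        + |T (Q n) x - T Qs x| := by
      have := abs_sub_abs_le_abs_sub (Qs x) (T Qs x)
      calc |Qs x - T Qs x|
          = |(Qs x - Q (n+1) x) + (Q (n+1) x - T (Q n) x) + (T (Q n) x - T Qs x)| := by
            ring_nf
        _ ≤ |Qs x - Q (n+1) x| + |Q (n+1) x - T (Q n) x| + |T (Q n) x - T Qs x| := by
            exact (abs_add_le _ _).trans (add_le_add_left (abs_add_le _ _) _)
        _ = |Q (n+1) x - Qs x| + |Q (n+1) x - T (Q n) x| + |T (Q n) x - T Qs x| := by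
            rw [abs_sub_comm]
    have h2 : |Q (n + 1) x - Qs x| ≤ ⨆ y, |Q (n + 1) y - Qs y| :=
      le_ciSup (hbd _ (hQmem (n+1)) _ hQs) x
    have h3 : |Q (n + 1) x - T (Q n) x| ≤ c (n + 1) := by
      rw [hQrec n]
      exact le_trans (le_ciSup (hbd _ (hTnmap (n+1) _ (hQmem n)) _ (hTmap _ (hQmem n))) x)
        (happrox (n+1) _ (hQmem n))
    have h4 : |T (Q n) x - T Qs x| ≤ γ * ⨆ y, |Q n y - Qs y| :=
      le_trans (le_ciSup (hbd _ (hTmap _ (hQmem n)) _ (hTmap _ hQs)) x)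
        (hcontr _ (hQmem n) _ hQs)
    calc |Qs x - T Qs x| ≤ _ := h1
      _ ≤ _ := add_le_add (add_le_add h2 h3) h4
  -- the bound tends to 0
  have htend : Tendsto (fun n => (⨆ y, |Q (n + 1) y - Qs y|) + c (n + 1)
      + γ * ⨆ y, |Q n y - Qs y|) atTop (nhds 0) := by
    have t1 : Tendsto (fun n => ⨆ y, |Q (n + 1) y - Qs y|) atTop (nhds 0) :=
      hconv.comp (tendsto_add_atTop_nat 1)
    have t2 : Tendsto (fun n => c (n + 1)) atTop (nhds 0) :=
      hc.comp (tendsto_add_atTop_nat 1)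
    have t3 : Tendsto (fun n => γ * ⨆ y, |Q n y - Qs y|) atTop (nhds 0) := by
      simpa using hconv.const_mul γ
    simpa using (t1.add t2).add t3
  have hfixQs : T Qs = Qs := by
    funext x
    have h : |Qs x - T Qs x| ≤ 0 := ge_of_tendsto' htend (key x)
    have := abs_nonpos_iff.mp h
    linarith
  exact huniq Qs hQs hfixQs
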